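/- Let Γ be a finite connected graph, G ≤ Aut(Γ) vertex-transitive, and N ⊴ G a normal subgroup with orbits 𝒪₁, …, 𝒪_m on the vertex set. Then there exist vertices β₁ ∈ 𝒪₁, …, β_m ∈ 𝒪_m such that the subgraph induced by Γ on {β₁, …, β_m} is connected. -/

import Mathlib

/-- If `N` is a normal subgroup of a vertex-transitive group of automorphisms of a finite
connected graph, then one can pick one vertex from each `N`-orbit so that the induced
subgraph on the chosen vertices is connected. -/
theorem stmt13 {V : Type*} [Fintype V] (Γ : SimpleGraph V) (hconn : Γ.Connected)
    (G N : Subgroup (Equiv.Perm V))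
    (hG : ∀ g ∈ G, ∀ u w : V, Γ.Adj (g u) (g w) ↔ Γ.Adj u w)
    (htrans : ∀ u w : V, ∃ g ∈ G, g u = w)
    (hNG : N ≤ G) (hnorm : ∀ g ∈ G, ∀ n ∈ N, g * n * g⁻¹ ∈ N) :
    ∃ X : Set V, (∀ v : V, ∃! x : V, x ∈ X ∧ x ∈ MulAction.orbit N v) ∧
      (Γ.induce X).Connected := by
  classical
  have hV : Nonempty V := hconn.nonempty
  -- adjacency is preserved by elements of N
  have hN : ∀ n : N, ∀ u w : V, Γ.Adj ((n : Equiv.Perm V) u) ((n : Equiv.Perm V) w) ↔ Γ.Adj u w :=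
    fun n u w => hG _ (hNG n.2) u w
  have hsmul : ∀ (n : N) (u : V), n • u = (n : Equiv.Perm V) u := fun n u => rfl
  -- the predicate: meets each orbit at most once and induces a connected subgraph
  set P : Finset V → Prop := fun X =>
    (∀ x ∈ X, ∀ y ∈ X, x ∈ MulAction.orbit N y → x = y) ∧ (Γ.induce (X : Set V)).Connected
    with hP
  -- a singleton works
  obtain ⟨v₀⟩ := hV
  have hsingle : P {v₀} := by
    constructor
    · intro x hx y hy _
      simp only [Finset.mem_singleton] at hx hy; rw [hx, hy]
    · haveI : Nonempty (↑((({v₀} : Finset V)) : Set V)) := ⟨⟨v₀, by simp⟩⟩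
      refine ⟨fun a b => ?_⟩
      have : a = b := by
        apply Subtype.ext
        have ha := a.2; have hb := b.2
        simp only [Finset.coe_singleton, Set.mem_singleton_iff] at ha hb
        rw [ha, hb]
      exact this ▸ SimpleGraph.Reachable.refl _
  -- pick a maximal such finset
  obtain ⟨X, hXmem, hXmax⟩ :=
    Finset.exists_max_image ((Finset.univ : Finset (Finset V)).filter P) Finset.card
      ⟨{v₀}, by simpa using hsingle⟩
  rw [Finset.mem_filter] at hXmem
  obtain ⟨-, hXinj, hXconn⟩ := hXmem
  have hXmax' : ∀ Y : Finset V, P Y → Y.card ≤ X.card := by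
    intro Y hY; exact hXmax Y (by simpa using hY)
  -- X meets every orbit
  have hcover : ∀ v : V, ∃ x ∈ X, v ∈ MulAction.orbit N x := by
    by_contra hcon
    push_neg at hcon
    obtain ⟨v, hv⟩ := hcon
    -- the union of the orbits of elements of X
    set S : Set V := {u | ∃ x ∈ X, u ∈ MulAction.orbit N x} with hS
    have hvS : v ∉ S := fun ⟨x, hx, hvx⟩ => hv x hx hvx
    obtain ⟨x₀, hx₀⟩ := hXconn.nonempty
    have hx₀X : x₀ ∈ X := Finset.mem_coe.1 hx₀
    have hx₀S : x₀ ∈ S := ⟨x₀, hx₀X, MulAction.mem_orbit_self _⟩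
    obtain ⟨d, -, hdfst, hdsnd⟩ :=
      ((hconn.preconnected (x₀ : V) v).some).exists_boundary_dart S hx₀S hvS
    obtain ⟨x, hxX, hfx⟩ := hdfst
    -- move d.fst onto x by an element of N
    have hxf : x ∈ MulAction.orbit N d.fst := MulAction.mem_orbit_symm.2 hfx
    obtain ⟨n, hn⟩ := hxf
    set w : V := n • d.snd with hw
    have hn2 : (n : Equiv.Perm V) d.fst = x := hn
    have hadj : Γ.Adj x w := by
      have hw2 : w = (n : Equiv.Perm V) d.snd := rfl
      rw [hw2, ← hn2]
      exact (hN n d.fst d.snd).2 d.adj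
    have hwS : w ∉ S := by
      rintro ⟨x', hx', hwx'⟩
      apply hdsnd
      have h1 : d.snd ∈ MulAction.orbit N w := MulAction.mem_orbit_symm.2 ⟨n, rfl⟩
      have h2 : MulAction.orbit N w = MulAction.orbit N x' := MulAction.orbit_eq_iff.2 hwx'
      exact ⟨x', hx', h2 ▸ h1⟩
    have hwX : w ∉ X := fun h => hwS ⟨w, h, MulAction.mem_orbit_self _⟩
    -- the enlarged set
    have hP' : P (insert w X) := by
      constructor
      · intro a ha b hb hab
        rcases Finset.mem_insert.1 ha with ha' | ha' <;>
          rcases Finset.mem_insert.1 hb with hb' | hb'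
        · rw [ha', hb']
        · exact absurd ⟨b, hb', ha' ▸ hab⟩ hwS
        · exact absurd ⟨a, ha', hb' ▸ MulAction.mem_orbit_symm.2 hab⟩ hwS
        · exact hXinj a ha' b hb' hab
      · have hset : ((insert w X : Finset V) : Set V) = ({w, x} : Set V) ∪ (X : Set V) := by
          ext u
          simp only [Finset.coe_insert, Set.mem_insert_iff, Set.mem_union,
            Finset.mem_coe, Set.mem_singleton_iff]
          constructor
          · rintro (h | h)
            · exact Or.inl (Or.inl h)
            · exact Or.inr h
          · rintro ((h | h) | h)
            · exact Or.inl h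
            · exact Or.inr (h ▸ hxX)
            · exact Or.inr h
        rw [hset]
        exact SimpleGraph.induce_union_connected
          (SimpleGraph.induce_pair_connected_of_adj hadj.symm).preconnected hXconn.preconnected
          ⟨x, Or.inr rfl, hxX⟩
    have := hXmax' _ hP'
    rw [Finset.card_insert_of_notMem hwX] at this
    omega
  -- assemble the final answer
  refine ⟨(X : Set V), ?_, hXconn⟩
  intro v
  obtain ⟨x, hxX, hvx⟩ := hcover v
  refine ⟨x, ⟨hxX, MulAction.mem_orbit_symm.2 hvx⟩, ?_⟩
  rintro y ⟨hyX, hyv⟩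
  apply hXinj y hyX x hxX
  have h1 : MulAction.orbit N y = MulAction.orbit N v :=
    MulAction.orbit_eq_iff.2 hyv
  have h2 : MulAction.orbit N x = MulAction.orbit N v :=
    MulAction.orbit_eq_iff.2 (MulAction.mem_orbit_symm.2 hvx)
  exact MulAction.orbit_eq_iff.1 (h1.trans h2.symm)
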